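/- Let A be an n×n real matrix and c a 1×n row vector such that (A, c) is completely observable. Then for all sufficiently small λ > 0, the pair (e^{λA}, c) is also completely observable; i.e., the matrix with rows c, c e^{λA}, ..., c e^{(n-1)λA} is invertible. -/

import Mathlib

open Matrix

private lemma vecMul_finset_sum {n : ℕ} (c : Fin n → ℝ) (s : Finset ℕ)
    (f : ℕ → Matrix (Fin n) (Fin n) ℝ) (j : Fin n) :
    (c ᵥ* ∑ k ∈ s, f k) j = ∑ k ∈ s, (c ᵥ* f k) j := by
  simp only [Matrix.vecMul, dotProduct, Matrix.sum_apply, Finset.mul_sum]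
  exact Finset.sum_comm

private lemma vecMul_smul_right {n : ℕ} (c : Fin n → ℝ) (s : ℝ)
    (M : Matrix (Fin n) (Fin n) ℝ) : c ᵥ* (s • M) = s • (c ᵥ* M) := by
  ext j
  simp [Matrix.vecMul, dotProduct, Finset.mul_sum, mul_left_comm]

/-- Binomial row reduction: replacing rows `c E^i` by `c (E-1)^i` does not change the
determinant, since the change of basis is unitriangular. -/
private lemma det_rows_sub_one {n : ℕ} (c : Fin n → ℝ) (E : Matrix (Fin n) (Fin n) ℝ) :
    (Matrix.of fun i j : Fin n => (c ᵥ* E ^ (i : ℕ)) j).det =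
      (Matrix.of fun i j : Fin n => (c ᵥ* (E - 1) ^ (i : ℕ)) j).det := by
  set N : Matrix (Fin n) (Fin n) ℝ := Matrix.of fun i j : Fin n => (c ᵥ* (E - 1) ^ (i : ℕ)) j
    with hN
  set L : Matrix (Fin n) (Fin n) ℝ := Matrix.of fun i k : Fin n => ((i : ℕ).choose (k : ℕ) : ℝ)
    with hL
  have hM : (Matrix.of fun i j : Fin n => (c ᵥ* E ^ (i : ℕ)) j) = L * N := by
    ext i j
    have hc : Commute (E - 1) (1 : Matrix (Fin n) (Fin n) ℝ) := Commute.one_right _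
    have hE : E ^ (i : ℕ) = ∑ k ∈ Finset.range ((i : ℕ) + 1),
        ((i : ℕ).choose k : ℝ) • (E - 1) ^ k := by
      have h2 := hc.add_pow (i : ℕ)
      simp only [sub_add_cancel, one_pow, mul_one] at h2
      rw [h2]
      refine Finset.sum_congr rfl fun k _ => ?_
      rw [Nat.cast_smul_eq_nsmul ℝ, nsmul_eq_mul]
      exact ((Nat.cast_commute _ _).eq).symm
    have key : (c ᵥ* E ^ (i : ℕ)) j
        = ∑ k ∈ Finset.range ((i : ℕ) + 1), ((i : ℕ).choose k : ℝ) * (c ᵥ* (E - 1) ^ k) j := by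
      rw [hE, vecMul_finset_sum]
      refine Finset.sum_congr rfl fun k _ => ?_
      rw [vecMul_smul_right]
      simp
    have hext : ∑ k ∈ Finset.range ((i : ℕ) + 1), ((i : ℕ).choose k : ℝ) * (c ᵥ* (E - 1) ^ k) j
        = ∑ k ∈ Finset.range n, ((i : ℕ).choose k : ℝ) * (c ᵥ* (E - 1) ^ k) j := by
      refine Finset.sum_subset (Finset.range_subset_range.mpr i.isLt) fun k _ hk => ?_
      have : (i : ℕ) < k := by
        simpa using hk
      rw [Nat.choose_eq_zero_of_lt this]
      simp
    rw [Matrix.of_apply, key, hext, Matrix.mul_apply,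
      ← Fin.sum_univ_eq_sum_range (fun k => ((i : ℕ).choose k : ℝ) * (c ᵥ* (E - 1) ^ k) j) n]
    rfl
  have hLdet : L.det = 1 := by
    have htri : L.BlockTriangular OrderDual.toDual := by
      intro i j hij
      have : (i : ℕ) < (j : ℕ) := hij
      simp [hL, Nat.choose_eq_zero_of_lt this]
    rw [Matrix.det_of_lowerTriangular L htri]
    simp [hL]
  rw [hM, Matrix.det_mul, hLdet, one_mul]

private lemma tendsto_exp_slope (n : ℕ) (A : Matrix (Fin n) (Fin n) ℝ) :
    Filter.Tendsto (fun lam : ℝ => lam⁻¹ • (NormedSpace.exp (lam • A) - 1))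
      (nhdsWithin (0 : ℝ) {0}ᶜ) (nhds A) := by
  letI : SeminormedRing (Matrix (Fin n) (Fin n) ℝ) := Matrix.linftyOpSemiNormedRing
  letI : NormedRing (Matrix (Fin n) (Fin n) ℝ) := Matrix.linftyOpNormedRing
  letI : NormedAlgebra ℝ (Matrix (Fin n) (Fin n) ℝ) := Matrix.linftyOpNormedAlgebra
  have h := hasDerivAt_exp_smul_const (𝕂 := ℝ) A (0 : ℝ)
  rw [zero_smul, NormedSpace.exp_zero, one_mul] at h
  rw [hasDerivAt_iff_tendsto_slope] at h
  have : (slope (fun u : ℝ => NormedSpace.exp (u • A)) 0)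
      = fun lam : ℝ => lam⁻¹ • (NormedSpace.exp (lam • A) - 1) := by
    funext lam
    rw [slope_def_module]
    simp [NormedSpace.exp_zero]
  convert h using 1
  exact this.symm
  rfl

theorem stmt18 (n : ℕ) (A : Matrix (Fin n) (Fin n) ℝ) (c : Fin n → ℝ)
    (hobs : IsUnit (Matrix.of fun i j : Fin n => (c ᵥ* A ^ (i : ℕ)) j).det) :
    ∃ ε > 0, ∀ lam : ℝ, 0 < lam → lam < ε →
      IsUnit (Matrix.of fun i j : Fin n =>
        (c ᵥ* (NormedSpace.exp (lam • A)) ^ (i : ℕ)) j).det := by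
  classical
  set D : Matrix (Fin n) (Fin n) ℝ → ℝ :=
    fun B => (Matrix.of fun i j : Fin n => (c ᵥ* B ^ (i : ℕ)) j).det with hD
  have hDcont : Continuous D := by
    apply Continuous.matrix_det
    apply continuous_matrix
    intro i j
    exact (continuous_apply j).comp
      (Continuous.matrix_vecMul continuous_const (continuous_pow (i : ℕ)))
  have hDA : D A ≠ 0 := by
    simpa [hD, isUnit_iff_ne_zero] using hobs
  have htend : Filter.Tendsto
      (fun lam : ℝ => D (lam⁻¹ • (NormedSpace.exp (lam • A) - 1)))
      (nhdsWithin (0 : ℝ) {0}ᶜ) (nhds (D A)) :=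
    (hDcont.tendsto A).comp (tendsto_exp_slope n A)
  have hev : ∀ᶠ lam in nhdsWithin (0 : ℝ) {0}ᶜ,
      D (lam⁻¹ • (NormedSpace.exp (lam • A) - 1)) ≠ 0 :=
    htend.eventually_ne hDA
  rw [Filter.eventually_iff, Metric.mem_nhdsWithin_iff] at hev
  obtain ⟨ε, hε, hball⟩ := hev
  refine ⟨ε, hε, fun lam h0 hlt => ?_⟩
  have hlam : lam ≠ 0 := ne_of_gt h0
  have hdist : dist lam 0 < ε := by
    rw [Real.dist_eq, sub_zero, abs_of_pos h0]; exact hlt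
  have hDB : D (lam⁻¹ • (NormedSpace.exp (lam • A) - 1)) ≠ 0 :=
    hball ⟨by simpa [Metric.mem_ball] using hdist, by simpa using hlam⟩
  set B : Matrix (Fin n) (Fin n) ℝ := lam⁻¹ • (NormedSpace.exp (lam • A) - 1) with hB
  have hEB : NormedSpace.exp (lam • A) - 1 = lam • B := by
    rw [hB, smul_smul, mul_inv_cancel₀ hlam, one_smul]
  rw [isUnit_iff_ne_zero, det_rows_sub_one, hEB]
  have hrows : (Matrix.of fun i j : Fin n => (c ᵥ* (lam • B) ^ (i : ℕ)) j)
      = Matrix.of fun i j : Fin n =>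
          (fun i : Fin n => lam ^ (i : ℕ)) i * (Matrix.of fun i j : Fin n => (c ᵥ* B ^ (i : ℕ)) j) i j := by
    ext i j
    rw [Matrix.of_apply, smul_pow, vecMul_smul_right]
    simp [mul_comm]
  rw [hrows, Matrix.det_mul_column]
  exact mul_ne_zero (Finset.prod_ne_zero_iff.mpr fun i _ => pow_ne_zero _ hlam) hDB
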